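/- For every twice continuously differentiable vector field u : ℝ³ → ℝ³, the identity ∇(axl(skew ∇u)) = (Curl(sym ∇u))ᵀ holds at every point, where ∇u is the Jacobian matrix of u, ∇(axl(skew ∇u)) is the Jacobian of the vector field axl(skew ∇u), and Curl(sym ∇u) is the row-wise Curl of the symmetric part of ∇u. -/

import Mathlib

open Matrix

/-- Partial derivative in direction `j` of a scalar field on `ℝ³`. -/
noncomputable def pd (j : Fin 3) (f : (Fin 3 → ℝ) → ℝ) (x : Fin 3 → ℝ) : ℝ :=
  fderiv ℝ f x (Pi.single j 1)

/-- Gradient of a scalar field on `ℝ³`. -/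
noncomputable def grad3 (f : (Fin 3 → ℝ) → ℝ) (x : Fin 3 → ℝ) : Fin 3 → ℝ :=
  fun i => pd i f x

/-- Classical curl of a vector field on `ℝ³`. -/
noncomputable def vcurl (v : (Fin 3 → ℝ) → Fin 3 → ℝ) (x : Fin 3 → ℝ) : Fin 3 → ℝ :=
  ![pd 1 (fun y => v y 2) x - pd 2 (fun y => v y 1) x,
    pd 2 (fun y => v y 0) x - pd 0 (fun y => v y 2) x,
    pd 0 (fun y => v y 1) x - pd 1 (fun y => v y 0) x]

/-- Divergence of a vector field on `ℝ³`. -/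
noncomputable def vdiv (v : (Fin 3 → ℝ) → Fin 3 → ℝ) (x : Fin 3 → ℝ) : ℝ :=
  ∑ i, pd i (fun y => v y i) x

/-- Row-wise Curl of a matrix field on `ℝ³`: the `i`-th row of `mCurl P`
is the curl of the `i`-th row of `P`. -/
noncomputable def mCurl (P : (Fin 3 → ℝ) → Matrix (Fin 3) (Fin 3) ℝ) (x : Fin 3 → ℝ) :
    Matrix (Fin 3) (Fin 3) ℝ :=
  Matrix.of fun i j => vcurl (fun y => P y i) x j

/-- Jacobian matrix of a vector field on `ℝ³`. -/
noncomputable def jac (v : (Fin 3 → ℝ) → Fin 3 → ℝ) (x : Fin 3 → ℝ) :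
    Matrix (Fin 3) (Fin 3) ℝ :=
  Matrix.of fun i j => pd j (fun y => v y i) x

/-- Axial vector of a (skew-symmetric) `3 × 3` matrix: with `A 1 2 = -a₁`,
`A 2 0 = -a₂`, `A 0 1 = -a₃` (so `A 2 1 = a₁`, `A 0 2 = a₂`, `A 1 0 = a₃`). -/
def axl (A : Matrix (Fin 3) (Fin 3) ℝ) : Fin 3 → ℝ :=
  ![A 2 1, A 0 2, A 1 0]

/-- The skew-symmetric matrix `anti a` characterized by `(anti a) ⬝ v = a × v`. -/
def antiM (a : Fin 3 → ℝ) : Matrix (Fin 3) (Fin 3) ℝ :=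
  !![0, -a 2, a 1; a 2, 0, -a 0; -a 1, a 0, 0]

/-- Symmetric part of a matrix. -/
noncomputable def symM (X : Matrix (Fin 3) (Fin 3) ℝ) : Matrix (Fin 3) (Fin 3) ℝ :=
  (1 / 2 : ℝ) • (X + Xᵀ)

/-- Skew-symmetric part of a matrix. -/
noncomputable def skewM (X : Matrix (Fin 3) (Fin 3) ℝ) : Matrix (Fin 3) (Fin 3) ℝ :=
  (1 / 2 : ℝ) • (X - Xᵀ)

/-- Deviatoric (trace-free) part of a matrix. -/
noncomputable def devM (X : Matrix (Fin 3) (Fin 3) ℝ) : Matrix (Fin 3) (Fin 3) ℝ :=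
  X - (Matrix.trace X / 3) • (1 : Matrix (Fin 3) (Fin 3) ℝ)

/-- Frobenius inner product `⟨X, Y⟩ = tr (X Yᵀ)`. -/
noncomputable def minner (X Y : Matrix (Fin 3) (Fin 3) ℝ) : ℝ :=
  Matrix.trace (X * Yᵀ)

/-- Squared Frobenius norm. -/
noncomputable def mnormSq (X : Matrix (Fin 3) (Fin 3) ℝ) : ℝ :=
  minner X X

/-- Squared Euclidean norm of a vector in `ℝ³`. -/
def vnormSq (v : Fin 3 → ℝ) : ℝ :=
  ∑ i, (v i) ^ 2


section AuxGradAxl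

private lemma pd_comm' (f : (Fin 3 → ℝ) → ℝ) (hf : ContDiff ℝ 2 f) (j k : Fin 3)
    (x : Fin 3 → ℝ) :
    pd j (fun y => pd k f y) x = pd k (fun y => pd j f y) x := by
  have hsymm : IsSymmSndFDerivAt ℝ f x := hf.contDiffAt.isSymmSndFDerivAt (by simp)
  have hdf : DifferentiableAt ℝ (fderiv ℝ f) x :=
    ((hf.fderiv_right (m := 1) le_rfl).differentiable one_ne_zero).differentiableAt
  have key : ∀ a b : Fin 3,
      pd a (fun y => pd b f y) x = fderiv ℝ (fderiv ℝ f) x (Pi.single a 1) (Pi.single b 1) := by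
    intro a b
    have : (fun y => pd b f y) = fun y => (fderiv ℝ f y) (Pi.single b 1) := rfl
    rw [pd, this, fderiv_clm_apply hdf (differentiableAt_const _)]
    simp
  rw [key, key, hsymm.eq]

private lemma pd_half_sub' (g h : (Fin 3 → ℝ) → ℝ) (j : Fin 3) (x : Fin 3 → ℝ)
    (hg : DifferentiableAt ℝ g x) (hh : DifferentiableAt ℝ h x) :
    pd j (fun y => (1/2 : ℝ) * (g y - h y)) x = (1/2 : ℝ) * (pd j g x - pd j h x) := by
  unfold pd
  rw [fderiv_const_mul (a := fun y => g y - h y) (hg.sub hh), fderiv_fun_sub hg hh]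
  simp

private lemma pd_half_add' (g h : (Fin 3 → ℝ) → ℝ) (j : Fin 3) (x : Fin 3 → ℝ)
    (hg : DifferentiableAt ℝ g x) (hh : DifferentiableAt ℝ h x) :
    pd j (fun y => (1/2 : ℝ) * (g y + h y)) x = (1/2 : ℝ) * (pd j g x + pd j h x) := by
  unfold pd
  rw [fderiv_const_mul (a := fun y => g y + h y) (hg.add hh), fderiv_fun_add hg hh]
  simp [mul_add]

private lemma key_grad_axl (g : Fin 3 → (Fin 3 → ℝ) → ℝ) (hg : ∀ k, ContDiff ℝ 2 (g k))
    (a b j : Fin 3) (x : Fin 3 → ℝ) :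
    pd j (fun y => (1/2 : ℝ) * (pd a (g b) y - pd b (g a) y)) x =
      pd a (fun y => (1/2 : ℝ) * (pd b (g j) y + pd j (g b) y)) x -
      pd b (fun y => (1/2 : ℝ) * (pd a (g j) y + pd j (g a) y)) x := by
  have hd : ∀ (p q : Fin 3), DifferentiableAt ℝ (fun y => pd p (g q) y) x := by
    intro p q
    exact (((ContinuousLinearMap.apply ℝ ℝ (Pi.single p (1:ℝ))).contDiff.comp
      ((hg q).fderiv_right (m := 1) le_rfl)).differentiable one_ne_zero).differentiableAt
  rw [pd_half_sub' _ _ _ _ (hd a b) (hd b a), pd_half_add' _ _ _ _ (hd b j) (hd j b),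
    pd_half_add' _ _ _ _ (hd a j) (hd j a),
    pd_comm' (g j) (hg j) a b x, pd_comm' (g b) (hg b) a j x, pd_comm' (g a) (hg a) b j x]
  ring

end AuxGradAxl

/-- ∇(axl(skew ∇u)) = (Curl(sym ∇u))ᵀ for every twice continuously
differentiable vector field u. -/
theorem grad_axl_skew_grad_eq
    (u : (Fin 3 → ℝ) → Fin 3 → ℝ) (hu : ContDiff ℝ 2 u) :
    ∀ x : Fin 3 → ℝ,
      jac (fun y => axl (skewM (jac u y))) x =
        (mCurl (fun y => symM (jac u y)) x)ᵀ := by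
  intro x
  have hf : ∀ k : Fin 3, ContDiff ℝ 2 (fun y => u y k) := fun k => contDiff_pi.1 hu k
  ext i j
  fin_cases i <;> fin_cases j <;>
    simp only [jac, mCurl, vcurl, symM, skewM, axl, Matrix.transpose_apply, Matrix.of_apply,
      Matrix.smul_apply, Matrix.add_apply, Matrix.sub_apply, smul_eq_mul,
      Fin.zero_eta, Fin.mk_one, Fin.reduceFinMk, Fin.isValue,
      Matrix.cons_val_zero, Matrix.cons_val_one, Matrix.head_cons, Matrix.cons_val_two,
      Matrix.tail_cons, Matrix.cons_val', Matrix.empty_val', Matrix.cons_val_fin_one,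
      Matrix.head_fin_const] <;>
    first
      | exact key_grad_axl (fun k y => u y k) hf 1 2 0 x
      | exact key_grad_axl (fun k y => u y k) hf 1 2 1 x
      | exact key_grad_axl (fun k y => u y k) hf 1 2 2 x
      | exact key_grad_axl (fun k y => u y k) hf 2 0 0 x
      | exact key_grad_axl (fun k y => u y k) hf 2 0 1 x
      | exact key_grad_axl (fun k y => u y k) hf 2 0 2 x
      | exact key_grad_axl (fun k y => u y k) hf 0 1 0 x
      | exact key_grad_axl (fun k y => u y k) hf 0 1 1 x
      | exact key_grad_axl (fun k y => u y k) hf 0 1 2 x
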